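/- Let d = n² + 1 be a squarefree integer with d ≡ 2 (mod 4) and d ≠ 2. Then the ideal [2, √d] = 2Z + √d Z of the ring of integers Z[√d] of Q(√d) is not a principal ideal. -/

import Mathlib

lemma no_sol_pm_two (n : ℤ) (hn : 2 ≤ n) :
    ∀ Y : ℕ, ∀ x y : ℤ, y.natAbs ≤ Y →
      (x ^ 2 - (n ^ 2 + 1) * y ^ 2 = 2 ∨ x ^ 2 - (n ^ 2 + 1) * y ^ 2 = -2) → False := by
  intro Y
  induction Y with
  | zero =>
    intro x y hy h
    have hy0 : y = 0 := by omega
    subst hy0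
    rcases h with h | h
    · have h1 : x ^ 2 = 2 := by linarith
      have h2 : 2 * x ≤ 3 := by nlinarith [sq_nonneg (x - 1)]
      have h3 : -3 ≤ 2 * x := by nlinarith [sq_nonneg (x + 1)]
      have h4 : x = -1 ∨ x = 0 ∨ x = 1 := by omega
      rcases h4 with rfl | rfl | rfl <;> norm_num at h1
    · nlinarith [sq_nonneg x]
  | succ Y ih =>
    intro x y hy h
    by_cases hY : y.natAbs ≤ Y
    · exact ih x y hY h
    have hb1 : 1 ≤ (y.natAbs : ℤ) := by omega
    have hbY : (y.natAbs : ℤ) ≤ Y + 1 := by omega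
    set a : ℤ := (x.natAbs : ℤ) with ha
    set b : ℤ := (y.natAbs : ℤ) with hb
    have h0a : 0 ≤ a := Int.natCast_nonneg _
    have h0nb : 0 ≤ n * b := by nlinarith
    have ha2 : a ^ 2 = x ^ 2 := Int.natAbs_sq x
    have hb2 : b ^ 2 = y ^ 2 := Int.natAbs_sq y
    rcases h with h | h
    · have h' : a ^ 2 - (n ^ 2 + 1) * b ^ 2 = 2 := by rw [ha2, hb2]; exact h
      have hnb : n * b < a := by
        by_contra hle
        push_neg at hle
        nlinarith [mul_le_mul hle hle h0a h0nb]
      have hub : a < (n + 1) * b := by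
        by_contra hle
        push_neg at hle
        have h0' : 0 ≤ (n + 1) * b := by nlinarith
        nlinarith [mul_le_mul hle hle h0' h0a]
      set r : ℤ := a - n * b with hr
      have hr1 : 1 ≤ r := by omega
      have hr2 : r ≤ b - 1 := by linarith
      have key : (b - n * r) ^ 2 - (n ^ 2 + 1) * r ^ 2 = -2 := by
        rw [hr]; linear_combination -h'
      have hrY : r.natAbs ≤ Y := by omega
      exact ih (b - n * r) r hrY (Or.inr key)
    · have h' : a ^ 2 - (n ^ 2 + 1) * b ^ 2 = -2 := by rw [ha2, hb2]; exact h
      by_cases hbone : b = 1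
      · subst_eqs
        rw [hbone] at h'
        have h1 : a < n := by
          by_contra hle
          push_neg at hle
          nlinarith [mul_le_mul hle hle (by linarith : (0:ℤ) ≤ n) h0a]
        have h2 : n - 1 < a := by
          by_contra hle
          push_neg at hle
          nlinarith [mul_le_mul hle hle h0a (by linarith : (0:ℤ) ≤ n - 1)]
        omega
      · have hb2' : 2 ≤ b := by omega
        have hnb : n * b < a := by
          by_contra hle
          push_neg at hle
          nlinarith [mul_le_mul hle hle h0a h0nb]
        have hub : a < (n + 1) * b := by
          by_contra hle
          push_neg at hle
          have h0' : 0 ≤ (n + 1) * b := by nlinarith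
          nlinarith [mul_le_mul hle hle h0' h0a]
        set r : ℤ := a - n * b with hr
        have hr1 : 1 ≤ r := by omega
        have hr2 : r ≤ b - 1 := by linarith
        have key : (b - n * r) ^ 2 - (n ^ 2 + 1) * r ^ 2 = 2 := by
          rw [hr]; linear_combination -h'
        have hrY : r.natAbs ≤ Y := by omega
        exact ih (b - n * r) r hrY (Or.inl key)

theorem stmt15 (n d : ℕ) (hdn : d = n ^ 2 + 1) (hsf : Squarefree d)
    (h4 : d % 4 = 2) (hne : d ≠ 2) :
    ¬ (Ideal.span ({2, Zsqrtd.sqrtd} : Set (Zsqrtd (d : ℤ)))).IsPrincipal := by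
  rintro ⟨g, hg⟩
  -- n is odd and at least 3
  have hn3 : 3 ≤ n := by
    rcases Nat.even_or_odd n with ⟨k, hk⟩ | ⟨k, hk⟩
    · subst hdn; subst hk
      have : (k + k) ^ 2 = 4 * k ^ 2 := by ring
      omega
    · subst hdn; subst hk
      have h1 : (2 * k + 1) ^ 2 = 4 * (k * k) + 4 * k + 1 := by ring
      have hk1 : 1 ≤ k := by
        by_contra hc
        push_neg at hc
        interval_cases k
        · norm_num at hne
      omega
  have hd : (d : ℤ) = (n : ℤ) ^ 2 + 1 := by exact_mod_cast congrArg (Nat.cast (R := ℤ)) hdn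
  -- membership
  have hg' : Ideal.span ({2, Zsqrtd.sqrtd} : Set (Zsqrtd (d : ℤ)))
      = Ideal.span ({g} : Set (Zsqrtd (d : ℤ))) := hg
  have h2m : (2 : Zsqrtd (d : ℤ)) ∈ Ideal.span ({g} : Set (Zsqrtd (d : ℤ))) := by
    rw [← hg']; exact Ideal.subset_span (by simp)
  have hsm : (Zsqrtd.sqrtd : Zsqrtd (d : ℤ)) ∈ Ideal.span ({g} : Set (Zsqrtd (d : ℤ))) := by
    rw [← hg']; exact Ideal.subset_span (by simp)
  rw [Ideal.mem_span_singleton] at h2m hsm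
  -- norm divisibilities
  have hN4 : g.norm ∣ 4 := by
    have := map_dvd (Zsqrtd.normMonoidHom (d := (d : ℤ))) h2m
    simpa [Zsqrtd.normMonoidHom, Zsqrtd.norm_def] using this
  have hNd : g.norm ∣ (d : ℤ) := by
    have := map_dvd (Zsqrtd.normMonoidHom (d := (d : ℤ))) hsm
    have h1 : (Zsqrtd.sqrtd : Zsqrtd (d : ℤ)).norm = -(d : ℤ) := by
      simp [Zsqrtd.norm_def]
    rw [Zsqrtd.normMonoidHom] at this
    simp only [MonoidHom.coe_mk, OneHom.coe_mk] at this
    rw [h1] at this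
    exact (dvd_neg).mp this
  have hN2 : g.norm ∣ 2 := by
    obtain ⟨k, hk⟩ : ∃ k, d = 4 * k + 2 := ⟨d / 4, by omega⟩
    have : (d : ℤ) = 4 * k + 2 := by exact_mod_cast congrArg (Nat.cast (R := ℤ)) hk
    have h5 : g.norm ∣ 4 * k := Dvd.dvd.mul_right hN4 k
    have h6 : g.norm ∣ (d : ℤ) - 4 * k := dvd_sub hNd h5
    have h7 : (d : ℤ) - 4 * k = 2 := by omega
    rwa [h7] at h6
  have hNa : g.norm.natAbs ∣ 2 := by
    have := Int.natAbs_dvd_natAbs.mpr hN2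
    simpa using this
  have hcase : g.norm.natAbs = 1 ∨ g.norm.natAbs = 2 := by
    have h1 : g.norm.natAbs ≤ 2 := Nat.le_of_dvd (by norm_num) hNa
    have h0 : g.norm.natAbs ≠ 0 := by
      intro h
      rw [h] at hNa
      exact absurd (Nat.eq_zero_of_zero_dvd hNa) (by norm_num)
    omega
  rcases hcase with hone | htwo
  · -- g is a unit, so 1 ∈ (2, √d), contradiction with parity of re
    have hu : IsUnit g := Zsqrtd.norm_eq_one_iff.mp hone
    have htop : Ideal.span ({g} : Set (Zsqrtd (d : ℤ))) = ⊤ :=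
      Ideal.span_singleton_eq_top.mpr hu
    rw [htop] at hg'
    have h1 : (1 : Zsqrtd (d : ℤ)) ∈ Ideal.span ({2, Zsqrtd.sqrtd} : Set (Zsqrtd (d : ℤ))) := by
      rw [hg']; trivial
    rw [Ideal.mem_span_pair] at h1
    obtain ⟨u, v, huv⟩ := h1
    have hre := congrArg Zsqrtd.re huv
    simp only [Zsqrtd.re_add, Zsqrtd.re_mul, Zsqrtd.re_one, Zsqrtd.im_one,
      Zsqrtd.re_sqrtd, Zsqrtd.im_sqrtd] at hre
    have h2re : (2 : Zsqrtd (d : ℤ)).re = 2 := rfl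
    have h2im : (2 : Zsqrtd (d : ℤ)).im = 0 := rfl
    rw [h2re, h2im] at hre
    obtain ⟨k, hk⟩ : ∃ k, d = 2 * k := ⟨d / 2, by omega⟩
    have hdk : (d : ℤ) = 2 * k := by exact_mod_cast congrArg (Nat.cast (R := ℤ)) hk
    have hdvd : (2 : ℤ) ∣ (d : ℤ) := Dvd.intro k hdk.symm
    obtain ⟨m, hm⟩ : (2 : ℤ) ∣ (d : ℤ) * v.im := hdvd.mul_right _
    omega
  · -- |norm g| = 2 : contradicts the descent lemma
    have h2 : g.norm = 2 ∨ g.norm = -2 := by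
      rcases Int.natAbs_eq g.norm with h | h <;> rw [htwo] at h
      · exact Or.inl h
      · exact Or.inr h
    have hn2 : (2 : ℤ) ≤ (n : ℤ) := by exact_mod_cast by omega
    refine no_sol_pm_two (n : ℤ) hn2 g.im.natAbs g.re g.im le_rfl ?_
    have hnorm : g.norm = g.re ^ 2 - ((n : ℤ) ^ 2 + 1) * g.im ^ 2 := by
      rw [Zsqrtd.norm_def]; linear_combination (-(g.im * g.im)) * hd
    rw [hnorm] at h2
    exact h2
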